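/- arXiv:1206.4134 — 5 statements merged into one kernel-verified Lean document; each statement's English description precedes it below -/
import Mathlib

section
/- Let y be a differentiable function on [0,T) satisfying y'(t) ≤ -C y(t)² + K for constants C, K > 0. If y(0) = y₀ < -√(K/C), then y(t) → -∞ in finite time; more precisely, y(t) tends to -∞ before t reaches 1/(-C y₀ + K/y₀). -/
open Set

/-- Riccati-type blow-up lemma (Lemma 2.10): if `y` is differentiable on `[0,T)` and
satisfies `y' ≤ -C y² + K` there, with `C, K > 0` and `y 0 < -√(K/C)`, then `y`
cannot persist past time `1/(-C y₀ + K/y₀)`; i.e. the solution goes to `-∞`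
before `t` reaches `1/(-C y₀ + K/y₀)`. -/
theorem riccati_blowup (T C K : ℝ) (hC : 0 < C) (hK : 0 < K) (y : ℝ → ℝ)
    (hdiff : ∀ t ∈ Ico 0 T, DifferentiableAt ℝ y t)
    (hineq : ∀ t ∈ Ico 0 T, deriv y t ≤ -C * (y t) ^ 2 + K)
    (hy0 : y 0 < -Real.sqrt (K / C)) :
    T ≤ 1 / (-C * y 0 + K / y 0) := by
  have hsq : Real.sqrt (K / C) ^ 2 = K / C := Real.sq_sqrt (div_pos hK hC).le
  have hsnn : 0 ≤ Real.sqrt (K / C) := Real.sqrt_nonneg _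
  have hy0neg : y 0 < 0 := lt_of_lt_of_le hy0 (by linarith)
  have hy0sq : K / C < (y 0) ^ 2 := by nlinarith
  have hKlt : K < C * (y 0) ^ 2 := by
    have := (div_lt_iff₀ hC).mp hy0sq
    linarith
  set a : ℝ := C - K / (y 0) ^ 2 with ha_def
  have hy0ne : y 0 ≠ 0 := hy0neg.ne
  have hy0sq_pos : 0 < (y 0) ^ 2 := pow_two_pos_of_ne_zero hy0ne
  have ha : 0 < a := by
    have : K / (y 0) ^ 2 < C := (div_lt_iff₀ hy0sq_pos).mpr (by linarith)
    simp only [ha_def]; linarith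
  have hBa : -C * y 0 + K / y 0 = -a * y 0 := by
    field_simp [ha_def]
    have hh : y 0 ^ 2 * (K / y 0 ^ 2) = K := by field_simp
    rw [ha_def]; linear_combination (-1 : ℝ) * hh
  have hB : 0 < -C * y 0 + K / y 0 := by
    rw [hBa]
    have : 0 < a * (-(y 0)) := mul_pos ha (by linarith)
    linarith
  have hcont : ∀ t ∈ Ico 0 T, ContinuousAt y t := fun t ht => (hdiff t ht).continuousAt
  -- Step 1: y stays ≤ y 0 on [0, T)
  have hle : ∀ t ∈ Ico (0:ℝ) T, y t ≤ y 0 := by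
    by_contra h
    push_neg at h
    obtain ⟨t₁, ht₁, hy₁⟩ := h
    set S : Set ℝ := {t | t ∈ Ico (0:ℝ) T ∧ y 0 < y t} with hS_def
    have hSne : S.Nonempty := ⟨t₁, ht₁, hy₁⟩
    have hSbd : BddBelow S := ⟨0, fun s hs => hs.1.1⟩
    set c := sInf S with hc_def
    have hc0 : 0 ≤ c := le_csInf hSne fun s hs => hs.1.1
    have hcT : c < T := lt_of_le_of_lt (csInf_le hSbd ⟨ht₁, hy₁⟩) ht₁.2
    have hcmem : c ∈ Ico (0:ℝ) T := ⟨hc0, hcT⟩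
    have h1 : y 0 ≤ y c := by
      by_contra h'
      push_neg at h'
      have hev : ∀ᶠ s in nhds c, y s < y 0 :=
        (hcont c hcmem).eventually_lt continuousAt_const h'
      rw [Metric.eventually_nhds_iff] at hev
      obtain ⟨ε, hε, hball⟩ := hev
      obtain ⟨s, hsS, hs⟩ := exists_lt_of_csInf_lt hSne (by linarith : sInf S < c + ε)
      have hsc : c ≤ s := csInf_le hSbd hsS
      have hd : dist s c < ε := by
        rw [Real.dist_eq, abs_lt]
        constructor <;> linarith
      have := hball hd
      exact absurd hsS.2 (by linarith)
    have h2 : y c ≤ y 0 := by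
      rcases eq_or_lt_of_le hc0 with h0 | h0
      · rw [← h0]
      · by_contra h'
        push_neg at h'
        have hev : ∀ᶠ s in nhds c, y 0 < y s :=
          continuousAt_const.eventually_lt (hcont c hcmem) h'
        rw [Metric.eventually_nhds_iff] at hev
        obtain ⟨ε, hε, hball⟩ := hev
        set s := max 0 (c - ε / 2) with hs_def
        have hs0 : 0 ≤ s := le_max_left _ _
        have hsc : s < c := by
          apply max_lt h0
          linarith
        have hd : dist s c < ε := by
          rw [Real.dist_eq, abs_lt]
          have : c - ε / 2 ≤ s := le_max_right _ _
          constructor <;> linarith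
        have hsS : s ∈ S := ⟨⟨hs0, lt_trans hsc hcT⟩, hball hd⟩
        have := csInf_le hSbd hsS
        linarith
    have hyc : y c = y 0 := le_antisymm h2 h1
    have hdneg : deriv y c < 0 := by
      have h3 := hineq c hcmem
      rw [hyc] at h3
      linarith
    have hder := (hdiff c hcmem).hasDerivAt
    have hslope := hasDerivAt_iff_tendsto_slope.mp hder
    have hev : ∀ᶠ s in nhdsWithin c {c}ᶜ, slope y c s < 0 :=
      hslope.eventually_lt_const hdneg
    rw [eventually_nhdsWithin_iff, Metric.eventually_nhds_iff] at hev
    obtain ⟨ε, hε, hball⟩ := hev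
    obtain ⟨s, hsS, hs⟩ := exists_lt_of_csInf_lt hSne (by linarith : sInf S < c + ε)
    have hsc : c ≤ s := csInf_le hSbd hsS
    have hne : s ≠ c := by
      intro h
      rw [h] at hsS
      have := hsS.2
      linarith [hyc]
    have hd : dist s c < ε := by
      rw [Real.dist_eq, abs_lt]
      constructor <;> linarith
    have hsl := hball hd (by simpa using hne)
    have hpos : 0 < slope y c s := by
      rw [slope_def_field]
      apply div_pos
      · have := hsS.2; linarith [hyc]
      · rcases lt_or_eq_of_le hsc with h | h
        · linarith
        · exact absurd h.symm hne
    linarith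
  -- Step 2: monotonicity of g t = (y t)⁻¹ - a * t on [0, t] for t < T
  have key : ∀ t ∈ Ico (0:ℝ) T, (y 0)⁻¹ ≤ (y t)⁻¹ - a * t := by
    intro t ht
    set g : ℝ → ℝ := fun s => (y s)⁻¹ - a * s with hg_def
    have hsub : Icc (0:ℝ) t ⊆ Ico (0:ℝ) T := fun s hs => ⟨hs.1, lt_of_le_of_lt hs.2 ht.2⟩
    have hyneg : ∀ s ∈ Icc (0:ℝ) t, y s < 0 := fun s hs =>
      lt_of_le_of_lt (hle s (hsub hs)) hy0neg
    have hgd : ∀ s ∈ Icc (0:ℝ) t,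
        HasDerivAt g (-(deriv y s) / (y s) ^ 2 - a) s := by
      intro s hs
      have hys : y s ≠ 0 := (hyneg s hs).ne
      have h1 := ((hdiff s (hsub hs)).hasDerivAt.inv hys)
      have h2 : HasDerivAt (fun x : ℝ => a * x) a s := by
        simpa using (hasDerivAt_id s).const_mul a
      exact h1.sub h2
    have hmono : MonotoneOn g (Icc 0 t) := by
      apply monotoneOn_of_deriv_nonneg (convex_Icc 0 t)
      · exact fun s hs => ((hgd s hs).differentiableAt).continuousAt.continuousWithinAt
      · intro s hs
        rw [interior_Icc] at hs
        exact ((hgd s (Ioo_subset_Icc_self hs)).differentiableAt).differentiableWithinAt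
      · intro s hs
        rw [interior_Icc] at hs
        have hs' : s ∈ Icc (0:ℝ) t := Ioo_subset_Icc_self hs
        rw [(hgd s hs').deriv]
        have hys := hyneg s hs'
        have hys2 : 0 < (y s) ^ 2 := pow_two_pos_of_ne_zero hys.ne
        have hiq := hineq s (hsub hs')
        have hyle : y s ≤ y 0 := hle s (hsub hs')
        have hy2 : (y 0) ^ 2 ≤ (y s) ^ 2 := by nlinarith
        have : a * (y s) ^ 2 ≤ -(deriv y s) := by
          have hay0 : a * (y 0) ^ 2 = C * (y 0) ^ 2 - K := by
            field_simp [ha_def]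
            have hh : y 0 ^ 2 * (K / y 0 ^ 2) = K := by field_simp
            rw [ha_def]; linear_combination (-1 : ℝ) * hh
          nlinarith [mul_nonneg (le_of_lt (div_pos hK hy0sq_pos))
            (sub_nonneg.mpr hy2)]
        rw [sub_nonneg, le_div_iff₀ hys2]
        linarith
    have h0t : (0:ℝ) ∈ Icc (0:ℝ) t := ⟨le_refl 0, ht.1⟩
    have htt : t ∈ Icc (0:ℝ) t := ⟨ht.1, le_refl t⟩
    have := hmono h0t htt ht.1
    simpa [hg_def] using this
  -- Conclusion
  by_contra hcon
  push_neg at hcon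
  set B := -C * y 0 + K / y 0 with hB_def
  have htmem : 1 / B ∈ Ico (0:ℝ) T := ⟨(div_pos one_pos hB).le, hcon⟩
  have h1 := key _ htmem
  have hyt : y (1 / B) < 0 := lt_of_le_of_lt (hle _ htmem) hy0neg
  have hinv : (y (1 / B))⁻¹ < 0 := inv_neg''.mpr hyt
  have hinv0 : (y 0)⁻¹ = 1 / y 0 := (one_div (y 0)).symm
  have h2 : (y 0)⁻¹ + a * (1 / B) < 0 := by linarith
  have hBval : B = -a * y 0 := hBa
  have hkey : a * (1 / B) = (-(y 0))⁻¹ := by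
    rw [hBval]
    field_simp
  rw [hkey, inv_neg] at h2
  linarith
end

section
/- Let m : [0,T) → ℝ be locally Lipschitz with m'(t) ≤ -(1/2) m(t)² + K almost everywhere, where K > 0. If m(0) < -√(2K), then m(t) → -∞ as t → T* for some T* ≤ 2 m(0) / (2K - m(0)²). -/
open Set MeasureTheory
open scoped ENNReal NNReal


/-- FTC-type bound for Lipschitz functions with a.e. derivative bound. -/
lemma lipschitz_deriv_bound (f : ℝ → ℝ) (a b : ℝ) (hab : a ≤ b) (L : NNReal)
    (hf : LipschitzOnWith L f (Icc a b)) (C : ℝ)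
    (hC : ∀ᵐ x ∂(volume : Measure ℝ), x ∈ Ioo a b → deriv f x ≤ C) :
    f b - f a ≤ C * (b - a) := by
  rcases eq_or_lt_of_le hab with rfl | hab'
  · simp
  -- enlarge the Lipschitz constant so that `C ≤ L₁`
  set L₁ : NNReal := L + C.toNNReal + 1 with hL₁
  have hLle : L ≤ L₁ := le_add_right (le_add_right le_rfl)
  have hfL₁ : LipschitzOnWith L₁ f (Icc a b) := fun x hx y hy =>
    le_trans (hf hx hy) (mul_le_mul_left (by exact_mod_cast hLle) _)
  have hCL₁ : C ≤ (L₁ : ℝ) := by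
    have h := Real.le_coe_toNNReal C
    rw [hL₁]
    push_cast
    linarith [NNReal.coe_nonneg L]
  obtain ⟨F, hF, hFf⟩ := hfL₁.extend_real
  -- `g` and `g2` are monotone continuous functions
  set g : ℝ → ℝ := fun x => (L₁ : ℝ) * x - F x with hg
  set g2 : ℝ → ℝ := fun x => (L₁ : ℝ) * x + F x with hg2
  have hFlip : ∀ x y : ℝ, |F y - F x| ≤ (L₁ : ℝ) * |y - x| := by
    intro x y
    have := hF.dist_le_mul y x
    simpa [Real.dist_eq] using this
  have hgm : Monotone g := by
    intro x y hxy
    have := hFlip x y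
    simp only [hg]
    have h2 : |y - x| = y - x := abs_of_nonneg (by linarith)
    have h3 := hFlip x y
    rw [h2] at h3
    have h4 : F y - F x ≤ |F y - F x| := le_abs_self _
    linarith
  have hg2m : Monotone g2 := by
    intro x y hxy
    have h2 : |y - x| = y - x := abs_of_nonneg (by linarith)
    have h3 := hFlip x y
    rw [h2] at h3
    have h4 : -(F y - F x) ≤ |F y - F x| := neg_le_abs _
    simp only [hg2]
    linarith
  have hFc : Continuous F := hF.continuous
  have hgc : Continuous g := by continuity
  have hg2c : Continuous g2 := by continuity
  set sf : StieltjesFunction ℝ := ⟨g, hgm, fun x => (hgc.continuousAt).continuousWithinAt⟩ with hsf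
  set sf2 : StieltjesFunction ℝ := ⟨g2, hg2m, fun x => (hg2c.continuousAt).continuousWithinAt⟩
  set μ := sf.measure with hμ
  -- μ + sf2.measure = (2 L₁) • volume
  have hsum : μ + sf2.measure = ((2 * L₁ : NNReal) : ℝ≥0∞) • (volume : Measure ℝ) := by
    refine MeasureTheory.Measure.ext_of_Ioc' _ _ (fun x y hxy => ?_) (fun x y hxy => ?_)
    · rw [hμ]
      simp only [Measure.coe_add, Pi.add_apply, StieltjesFunction.measure_Ioc]
      exact ENNReal.add_ne_top.2 ⟨ENNReal.ofReal_ne_top, ENNReal.ofReal_ne_top⟩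
    rw [hμ]
    simp only [Measure.coe_add, Pi.add_apply, StieltjesFunction.measure_Ioc,
      Measure.smul_apply, smul_eq_mul, Real.volume_Ioc]
    have h1 : sf y - sf x = (L₁ : ℝ) * y - F y - ((L₁:ℝ) * x - F x) := rfl
    have h2 : sf2 y - sf2 x = (L₁ : ℝ) * y + F y - ((L₁:ℝ) * x + F x) := rfl
    rw [h1, h2, ← ENNReal.ofReal_add (by nlinarith [hgm hxy.le]) (by nlinarith [hg2m hxy.le])]
    rw [← ENNReal.ofReal_coe_nnreal, ← ENNReal.ofReal_mul (by positivity)]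
    congr 1
    push_cast
    ring
  have hac : μ ≪ (volume : Measure ℝ) := by
    intro s hs
    have h1 : μ s ≤ (μ + sf2.measure) s := by
      simp only [Measure.coe_add, Pi.add_apply]; exact le_self_add
    rw [hsum] at h1
    simp only [Measure.smul_apply, smul_eq_mul, hs, mul_zero] at h1
    exact le_antisymm (le_trans h1 le_rfl) zero_le
  have hwd : (volume : Measure ℝ).withDensity (μ.rnDeriv volume) = μ :=
    Measure.withDensity_rnDeriv_eq _ _ hac
  -- a.e. lower bound on the rnDeriv on `Ioo a b`
  have hae : ∀ᵐ x ∂(volume : Measure ℝ), x ∈ Ioo a b →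
      ENNReal.ofReal ((L₁ : ℝ) - C) ≤ μ.rnDeriv volume x := by
    filter_upwards [sf.ae_hasDerivAt, Measure.rnDeriv_lt_top μ volume, hC] with x hx hfin hCx hmem
    have hgx : HasDerivAt g ((μ.rnDeriv volume x).toReal) x := hx
    have hFx : HasDerivAt F ((L₁ : ℝ) - (μ.rnDeriv volume x).toReal) x := by
      have h0 : HasDerivAt (fun y : ℝ => (L₁ : ℝ) * y) (L₁ : ℝ) x := by
        simpa using (hasDerivAt_id x).const_mul (L₁ : ℝ)
      have h1 : HasDerivAt (fun y => (L₁ : ℝ) * y - g y)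
          ((L₁ : ℝ) - (μ.rnDeriv volume x).toReal) x := h0.sub hgx
      convert h1 using 1
      funext y
      simp [hg]
    have hFderiv : deriv F x = (L₁ : ℝ) - (μ.rnDeriv volume x).toReal := hFx.deriv
    have hefx : deriv f x = deriv F x := by
      apply Filter.EventuallyEq.deriv_eq
      filter_upwards [Icc_mem_nhds hmem.1 hmem.2] with y hy
      exact hFf hy
    have hle : (L₁ : ℝ) - C ≤ (μ.rnDeriv volume x).toReal := by
      have := hCx hmem
      rw [hefx, hFderiv] at this
      linarith
    calc ENNReal.ofReal ((L₁ : ℝ) - C) ≤ ENNReal.ofReal ((μ.rnDeriv volume x).toReal) :=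
          ENNReal.ofReal_le_ofReal hle
      _ = μ.rnDeriv volume x := ENNReal.ofReal_toReal hfin.ne
  -- integrate
  have hIoo : ENNReal.ofReal ((L₁ : ℝ) - C) * ENNReal.ofReal (b - a) ≤ μ (Ioo a b) := by
    rw [← hwd, withDensity_apply _ measurableSet_Ioo]
    calc ENNReal.ofReal ((L₁ : ℝ) - C) * ENNReal.ofReal (b - a)
        = ∫⁻ _ in Ioo a b, ENNReal.ofReal ((L₁ : ℝ) - C) ∂(volume : Measure ℝ) := by
          rw [MeasureTheory.setLIntegral_const, Real.volume_Ioo]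
      _ ≤ ∫⁻ x in Ioo a b, μ.rnDeriv volume x ∂(volume : Measure ℝ) := by
          refine lintegral_mono_ae ?_
          exact (ae_restrict_iff' measurableSet_Ioo).2 hae
  have hIoc : μ (Ioo a b) ≤ ENNReal.ofReal (g b - g a) := by
    have : μ (Ioo a b) ≤ μ (Ioc a b) := measure_mono Ioo_subset_Ioc_self
    simpa [hμ, StieltjesFunction.measure_Ioc] using this
  have hmain : ENNReal.ofReal (((L₁ : ℝ) - C) * (b - a)) ≤ ENNReal.ofReal (g b - g a) := by
    rw [ENNReal.ofReal_mul (by linarith)]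
    exact le_trans hIoo hIoc
  have h2 : ((L₁ : ℝ) - C) * (b - a) ≤ g b - g a := by
    have hnn : 0 ≤ g b - g a := by linarith [hgm hab]
    exact (ENNReal.ofReal_le_ofReal_iff hnn).1 hmain
  have hFa : F a = f a := (hFf (left_mem_Icc.2 hab)).symm
  have hFb : F b = f b := (hFf (right_mem_Icc.2 hab)).symm
  simp only [hg] at h2
  rw [hFa, hFb] at h2
  nlinarith


set_option maxHeartbeats 1000000 in
/-- Riccati blow-up for locally Lipschitz functions: if `m` is locally Lipschitz on
`[0,T)` with `m' ≤ -½ m² + K` a.e. and `m 0 < -√(2K)` (`K > 0`), then `m` goes to `-∞`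
at some time `T* ≤ 2 m(0)/(2K - m(0)²)`; in particular `T ≤ 2 m(0)/(2K - m(0)²)`. -/
theorem riccati_blowup_lipschitz (T K : ℝ) (hK : 0 < K) (m : ℝ → ℝ)
    (hlip : ∀ t ∈ Ico 0 T, ∃ L : NNReal, LipschitzOnWith L m (Icc 0 t))
    (hineq : ∀ᵐ t ∂(volume : Measure ℝ),
      t ∈ Ioo 0 T → deriv m t ≤ -(1/2) * (m t) ^ 2 + K)
    (hm0 : m 0 < -Real.sqrt (2 * K)) :
    T ≤ 2 * m 0 / (2 * K - (m 0) ^ 2) := by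
  have hs2K : Real.sqrt (2 * K) ^ 2 = 2 * K := Real.sq_sqrt (by positivity)
  have hsnn : 0 ≤ Real.sqrt (2 * K) := Real.sqrt_nonneg _
  have hm0neg : m 0 < 0 := lt_of_lt_of_le hm0 (by linarith)
  have hm0ne : m 0 ≠ 0 := hm0neg.ne
  have hm0sq : 2 * K < (m 0) ^ 2 := by nlinarith
  set M : ℝ := (m 0 - Real.sqrt (2 * K)) / 2 with hM
  have hm0M : m 0 < M := by rw [hM]; linarith
  have hMneg : M < 0 := by rw [hM]; linarith
  have hMsq : 2 * K < M ^ 2 := by rw [hM]; nlinarith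
  set ε : ℝ := M ^ 2 / 2 - K with hε
  have hεpos : 0 < ε := by rw [hε]; linarith
  -- a.e. differentiability of `m` on `Ioo 0 T`
  have hdiff : ∀ᵐ u ∂(volume : Measure ℝ), u ∈ Ioo 0 T → DifferentiableAt ℝ m u := by
    have H : ∀ q : ℚ, ∀ᵐ u ∂(volume : Measure ℝ), (0 < (q : ℝ) ∧ (q : ℝ) < T) →
        (u ∈ Icc (0:ℝ) q → DifferentiableWithinAt ℝ m (Icc (0:ℝ) q) u) := by
      intro q
      by_cases hq : 0 < (q : ℝ) ∧ (q : ℝ) < T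
      · obtain ⟨L, hL⟩ := hlip q ⟨hq.1.le, hq.2⟩
        filter_upwards [hL.locallyBoundedVariationOn.ae_differentiableWithinAt_of_mem_real]
          with u hu _ hmem
        exact hu hmem
      · filter_upwards with u hu
        exact absurd hu hq
    filter_upwards [MeasureTheory.ae_all_iff.2 H] with u hu humem
    obtain ⟨q, hq1, hq2⟩ := exists_rat_btwn humem.2
    have h0q : 0 < (q : ℝ) := lt_trans humem.1 hq1
    exact (hu q ⟨h0q, hq2⟩ ⟨humem.1.le, hq1.le⟩).differentiableAt (Icc_mem_nhds humem.1 hq1)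
  -- Stage 1: `m ≤ m 0` on every `[0, b] ⊆ [0, T)`
  have stage1 : ∀ b ∈ Ico (0:ℝ) T, ∀ t ∈ Icc (0:ℝ) b, m t ≤ m 0 := by
    intro b hb
    obtain ⟨Lb, hLb⟩ := hlip b hb
    have hmc : ContinuousOn m (Icc 0 b) := hLb.continuousOn
    -- the key estimate, valid as long as `m < M` on `[0, u)`
    have hkey : ∀ u, 0 ≤ u → u < T → (∀ x, 0 ≤ x → x < u → m x < M) → m u ≤ m 0 := by
      intro u h0u huT hsmall
      obtain ⟨Lu, hLu⟩ := hlip u ⟨h0u, huT⟩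
      have := lipschitz_deriv_bound m 0 u h0u Lu hLu (-ε) ?_
      · nlinarith
      · filter_upwards [hineq] with x hx hxu
        have hxT : x ∈ Ioo 0 T := ⟨hxu.1, lt_trans hxu.2 huT⟩
        have h1 := hx hxT
        have h2 : m x < M := hsmall x hxu.1.le hxu.2
        have h3 : M ^ 2 ≤ (m x) ^ 2 := by nlinarith
        rw [hε]
        linarith
    have hmb : ∀ t ∈ Icc (0:ℝ) b, m t < M := by
      by_contra hbad
      push_neg at hbad
      obtain ⟨t0, ht0, ht0M⟩ := hbad
      set Bad : Set ℝ := Icc 0 b ∩ m ⁻¹' (Ici M) with hBad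
      have hBadc : IsClosed Bad := hmc.preimage_isClosed_of_isClosed isClosed_Icc isClosed_Ici
      have hBadne : Bad.Nonempty := ⟨t0, ht0, ht0M⟩
      have hbdd : BddBelow Bad := ⟨0, fun x hx => hx.1.1⟩
      set t1 := sInf Bad with ht1def
      have ht1 : t1 ∈ Bad := hBadc.csInf_mem hBadne hbdd
      have ht1pos : 0 < t1 := by
        rcases eq_or_lt_of_le ht1.1.1 with h | h
        · exact absurd (ht1.2 : M ≤ m t1) (by rw [← h]; exact not_le.2 hm0M)
        · exact h
      have hlt : ∀ x, 0 ≤ x → x < t1 → m x < M := by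
        intro x h0x hxt1
        by_contra hc
        push_neg at hc
        have hxB : x ∈ Bad := ⟨⟨h0x, le_trans hxt1.le ht1.1.2⟩, hc⟩
        exact absurd (csInf_le hbdd hxB) (not_le.2 hxt1)
      have hmu : ∀ x, 0 ≤ x → x < t1 → m x ≤ m 0 := by
        intro x h0x hxt1
        exact hkey x h0x (lt_of_lt_of_le (lt_of_lt_of_le hxt1 ht1.1.2) hb.2.le)
          (fun y h0y hyx => hlt y h0y (lt_trans hyx hxt1))
      have hmt1 : m t1 ≤ m 0 := by
        have hne : (nhdsWithin t1 (Ico (0:ℝ) t1)).NeBot := by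
          refine mem_closure_iff_nhdsWithin_neBot.1 ?_
          rw [closure_Ico ht1pos.ne]
          exact right_mem_Icc.2 ht1pos.le
        have htend : Filter.Tendsto m (nhdsWithin t1 (Ico (0:ℝ) t1)) (nhds (m t1)) :=
          (hmc t1 ht1.1).mono (fun x hx => ⟨hx.1, le_trans hx.2.le ht1.1.2⟩)
        exact le_of_tendsto htend
          (Filter.eventually_of_mem self_mem_nhdsWithin (fun x hx => hmu x hx.1 hx.2))
      exact absurd (le_trans ht1.2 hmt1) (not_le.2 hm0M)
    intro t ht
    exact hkey t ht.1 (lt_of_le_of_lt ht.2 hb.2)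
      (fun x h0x hxt => hmb x ⟨h0x, le_trans hxt.le ht.2⟩)
  -- Stage 2
  have hB : ∀ t ∈ Ico (0:ℝ) T, t < 2 * m 0 / (2 * K - (m 0) ^ 2) := by
    intro t ht
    have hmneg : ∀ u ∈ Icc (0:ℝ) t, m u ≤ m 0 := stage1 t ht
    obtain ⟨L, hL⟩ := hlip t ht
    set h : ℝ → ℝ := fun u => -(m u)⁻¹ with hh
    set c : ℝ := 1/2 - K / (m 0) ^ 2 with hc
    have hcpos : 0 < c := by
      rw [hc]
      have : K / (m 0) ^ 2 < 1/2 := by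
        rw [div_lt_iff₀ (by positivity)]
        nlinarith
      linarith
    -- Lipschitz bound for h on [0, t]
    have hLh : LipschitzOnWith (Real.toNNReal ((L : ℝ) / (m 0) ^ 2)) h (Icc 0 t) := by
      rw [lipschitzOnWith_iff_dist_le_mul]
      intro u hu v hv
      have hmu := hmneg u hu
      have hmv := hmneg v hv
      have hmune : m u ≠ 0 := (lt_of_le_of_lt hmu hm0neg).ne
      have hmvne : m v ≠ 0 := (lt_of_le_of_lt hmv hm0neg).ne
      have hdiff_eq : h u - h v = (m u - m v) / (m u * m v) := by
        rw [hh]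
        field_simp
        ring
      rw [Real.dist_eq, Real.dist_eq, hdiff_eq, abs_div, abs_mul]
      have hcoe : (Real.toNNReal ((L : ℝ) / (m 0) ^ 2) : ℝ) = (L : ℝ) / (m 0) ^ 2 :=
        Real.coe_toNNReal _ (by positivity)
      rw [hcoe, div_mul_eq_mul_div]
      refine div_le_div₀ (by positivity) ?_ (by positivity) ?_
      · have := hL.dist_le_mul u hu v hv
        rwa [Real.dist_eq, Real.dist_eq] at this
      · have h1 : -(m 0) ≤ |m u| := by rw [abs_of_neg (lt_of_le_of_lt hmu hm0neg)]; linarith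
        have h2 : -(m 0) ≤ |m v| := by rw [abs_of_neg (lt_of_le_of_lt hmv hm0neg)]; linarith
        nlinarith
    -- a.e. derivative bound for h
    have hae : ∀ᵐ x ∂(volume : Measure ℝ), x ∈ Ioo 0 t → deriv h x ≤ -c := by
      filter_upwards [hineq, hdiff] with x hx1 hx2 hxmem
      have hxT : x ∈ Ioo 0 T := ⟨hxmem.1, lt_trans hxmem.2 ht.2⟩
      have hdx := hx2 hxT
      have hineqx := hx1 hxT
      have hmx : m x ≤ m 0 := hmneg x ⟨hxmem.1.le, hxmem.2.le⟩
      have hmxne : m x ≠ 0 := (lt_of_le_of_lt hmx hm0neg).ne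
      have hder : HasDerivAt h (deriv m x / (m x) ^ 2) x := by
        have := (hdx.hasDerivAt.inv hmxne).neg
        rw [neg_div, neg_neg] at this
        exact this
      rw [hder.deriv, div_le_iff₀ (by positivity)]
      have hsq : (m 0) ^ 2 ≤ (m x) ^ 2 := by nlinarith
      have hKle : K ≤ K / (m 0) ^ 2 * (m x) ^ 2 := by
        rw [div_mul_eq_mul_div, le_div_iff₀ (by positivity)]
        nlinarith
      rw [hc]
      nlinarith
    have := lipschitz_deriv_bound h 0 t ht.1 _ hLh (-c) hae
    have hht : 0 < h t := by
      rw [hh]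
      simp only
      have : m t < 0 := lt_of_le_of_lt (hmneg t ⟨ht.1, le_rfl⟩) hm0neg
      have := inv_neg''.mpr this
      linarith
    have hh0 : h 0 = -(m 0)⁻¹ := rfl
    -- from 0 < h t ≤ h 0 - c t : c * t < -(m 0)⁻¹
    have f1 : c * t < -(m 0)⁻¹ := by
      rw [← hh0]
      nlinarith
    have f2 : c * t * (m 0) ^ 2 < -(m 0)⁻¹ * (m 0) ^ 2 :=
      mul_lt_mul_of_pos_right f1 (by positivity)
    have e1 : c * t * (m 0) ^ 2 = t * ((m 0) ^ 2 / 2 - K) := by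
      rw [hc]; field_simp
    have e2 : -(m 0)⁻¹ * (m 0) ^ 2 = -(m 0) := by
      field_simp
    rw [e1, e2] at f2
    rw [lt_div_iff_of_neg (by linarith : 2 * K - (m 0) ^ 2 < 0)]
    nlinarith
  by_contra hcon
  push_neg at hcon
  have hBpos : 0 < 2 * m 0 / (2 * K - (m 0) ^ 2) :=
    div_pos_of_neg_of_neg (by linarith) (by linarith)
  exact absurd (hB _ ⟨hBpos.le, hcon⟩) (lt_irrefl _)
end

section
/- Let m : [0,T) → ℝ be locally Lipschitz satisfying -K ≤ m'(t) + (1/2) m(t)² ≤ K a.e. on (0,T) for some constant K > 0, and suppose liminf_{t→T} m(t) = -∞. Then lim_{t→T} (T - t) m(t) = -2. -/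
open Set MeasureTheory Filter

lemma lip_ae_hasDerivAt {f : ℝ → ℝ} {a b c : ℝ} {L : NNReal}
    (hbc : b < c) (hf : LipschitzOnWith L f (Icc a c)) :
    ∀ᵐ t ∂(volume.restrict (Ioc a b)), HasDerivAt f (deriv f t) t ∧ |deriv f t| ≤ L := by
  have h0 : ∀ᵐ t ∂(volume : Measure ℝ), t ∈ Icc a c → DifferentiableWithinAt ℝ f (Icc a c) t :=
    hf.ae_differentiableWithinAt_of_mem
  rw [ae_restrict_iff' measurableSet_Ioc]
  filter_upwards [h0] with t ht hmem
  have htIoo : t ∈ Ioo a c := ⟨hmem.1, lt_of_le_of_lt hmem.2 hbc⟩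
  have hnbhd : Icc a c ∈ nhds t :=
    mem_of_superset (isOpen_Ioo.mem_nhds htIoo) Ioo_subset_Icc_self
  have hd : DifferentiableAt ℝ f t :=
    (ht (Ioo_subset_Icc_self htIoo)).differentiableAt hnbhd
  have hD : HasDerivAt f (deriv f t) t := hd.hasDerivAt
  refine ⟨hD, ?_⟩
  have hF : HasFDerivAt f (ContinuousLinearMap.smulRight (1 : ℝ →L[ℝ] ℝ) (deriv f t)) t :=
    hasDerivAt_iff_hasFDerivAt.1 hD
  have hb := hF.le_of_lipschitzOn hnbhd hf
  calc |deriv f t| = ‖(ContinuousLinearMap.smulRight (1 : ℝ →L[ℝ] ℝ) (deriv f t)) 1‖ := by simp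
    _ ≤ ‖ContinuousLinearMap.smulRight (1 : ℝ →L[ℝ] ℝ) (deriv f t)‖ * ‖(1 : ℝ)‖ :=
        ContinuousLinearMap.le_opNorm _ _
    _ ≤ L := by simpa using hb

lemma lip_deriv_integrableOn {f : ℝ → ℝ} {a b c : ℝ} {L : NNReal}
    (hbc : b < c) (hf : LipschitzOnWith L f (Icc a c)) :
    IntegrableOn (deriv f) (Ioc a b) volume := by
  refine Integrable.mono' (integrable_const (L : ℝ)) ((measurable_deriv f).aestronglyMeasurable) ?_
  filter_upwards [lip_ae_hasDerivAt hbc hf] with t ht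
  simpa [Real.norm_eq_abs] using ht.2


lemma lip_ftc {f : ℝ → ℝ} {a b c : ℝ} {L : NNReal} (hab : a ≤ b) (hbc : b < c)
    (hf : LipschitzOnWith L f (Icc a c)) :
    ∫ t in Ioc a b, deriv f t = f b - f a := by
  have hcont : ContinuousOn f (Icc a c) := hf.continuousOn
  have hac : a ≤ c := hab.trans hbc.le
  set δ : ℕ → ℝ := fun n => (c - b) / (n + 1) with hδdef
  have hδpos : ∀ n, 0 < δ n := fun n => by
    apply div_pos (by linarith) (by positivity)
  have hδle : ∀ n, δ n ≤ c - b := fun n => by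
    apply div_le_self (by linarith)
    linarith [Nat.cast_nonneg (α := ℝ) n]
  have hδ0 : Tendsto δ atTop (nhds 0) := by
    have := tendsto_one_div_add_atTop_nhds_zero_nat (𝕜 := ℝ)
    have h2 := this.const_mul (c - b)
    simpa [hδdef, div_eq_mul_inv, mul_comm] using h2
  set g : ℕ → ℝ → ℝ := fun n t => (f (t + δ n) - f t) / δ n with hgdef
  -- interval integrability of f on subintervals
  have hint : ∀ p q, p ∈ Icc a c → q ∈ Icc a c → IntervalIntegrable f volume p q := by
    intro p q hp hq
    exact (hcont.mono (uIcc_subset_Icc hp hq)).intervalIntegrable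
  -- Step 1: integral identity
  have key : ∀ n, ∫ t in Ioc a b, g n t =
      ((∫ t in b..(b + δ n), f t) - ∫ t in a..(a + δ n), f t) / δ n := by
    intro n
    have hbδ : b + δ n ∈ Icc a c := ⟨by linarith [hδpos n], by linarith [hδle n]⟩
    have haδ : a + δ n ∈ Icc a c := ⟨by linarith [hδpos n], by linarith [hδle n, hab]⟩
    have hshift : ∫ t in a..b, f (t + δ n) = ∫ t in (a + δ n)..(b + δ n), f t :=
      intervalIntegral.integral_comp_add_right f (δ n)
    have h1 : (∫ t in a..(a + δ n), f t) + ∫ t in (a + δ n)..(b + δ n), f t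
        = ∫ t in a..(b + δ n), f t :=
      intervalIntegral.integral_add_adjacent_intervals
        (hint _ _ (left_mem_Icc.2 hac) haδ) (hint _ _ haδ hbδ)
    have h2 : (∫ t in a..b, f t) + ∫ t in b..(b + δ n), f t = ∫ t in a..(b + δ n), f t :=
      intervalIntegral.integral_add_adjacent_intervals
        (hint _ _ (left_mem_Icc.2 hac) ⟨hab, hbc.le⟩) (hint _ _ ⟨hab, hbc.le⟩ hbδ)
    have hfint : IntervalIntegrable f volume a b := hint _ _ (left_mem_Icc.2 hac) ⟨hab, hbc.le⟩
    have hfshiftint : IntervalIntegrable (fun t => f (t + δ n)) volume a b := by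
      have := (hint _ _ haδ hbδ).comp_add_right (δ n)
      simpa using this
    have hsub : ∫ t in a..b, (f (t + δ n) - f t) =
        (∫ t in b..(b + δ n), f t) - ∫ t in a..(a + δ n), f t := by
      rw [intervalIntegral.integral_sub hfshiftint hfint, hshift]
      linarith [h1, h2]
    calc ∫ t in Ioc a b, g n t = ∫ t in a..b, g n t := (intervalIntegral.integral_of_le hab).symm
      _ = (∫ t in a..b, (f (t + δ n) - f t)) / δ n := by
          simp only [hgdef]
          rw [intervalIntegral.integral_div]
      _ = _ := by rw [hsub]
  -- Step 2: RHS limit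
  have endpt : ∀ x, x ∈ Icc a b → Tendsto (fun n => (∫ t in x..(x + δ n), f t) / δ n)
      atTop (nhds (f x)) := by
    intro x hx
    have hxc : x ∈ Icc a c := ⟨hx.1, hx.2.trans hbc.le⟩
    have hbound : ∀ n, |(∫ t in x..(x + δ n), f t) / δ n - f x| ≤ L * δ n := by
      intro n
      have hxδ : x + δ n ∈ Icc a c := ⟨by linarith [hδpos n, hx.1], by linarith [hδle n, hx.2]⟩
      have hcst : ∫ t in x..(x + δ n), (f x : ℝ) = (δ n) * f x := by
        rw [intervalIntegral.integral_const, smul_eq_mul]; ring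
      have hsb : (∫ t in x..(x + δ n), f t) / δ n - f x
          = (∫ t in x..(x + δ n), (f t - f x)) / δ n := by
        rw [intervalIntegral.integral_sub (hint _ _ hxc hxδ)
          (intervalIntegrable_const), hcst, sub_div, mul_comm (δ n) (f x),
          mul_div_assoc, div_self (hδpos n).ne', mul_one]
      rw [hsb, abs_div, abs_of_pos (hδpos n), div_le_iff₀ (hδpos n)]
      have : ‖∫ t in x..(x + δ n), (f t - f x)‖ ≤ (L * δ n) * |(x + δ n) - x| := by
        apply intervalIntegral.norm_integral_le_of_norm_le_const
        intro y hy
        rw [uIoc_of_le (by linarith [hδpos n])] at hy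
        have hy1 : y ∈ Icc a c := ⟨by linarith [hy.1.le, hx.1], by
          have := hy.2
          rcases hxδ with ⟨_, h2⟩
          linarith⟩
        have := hf.dist_le_mul y hy1 x hxc
        rw [Real.dist_eq, Real.dist_eq] at this
        calc ‖f y - f x‖ = |f y - f x| := rfl
          _ ≤ L * |y - x| := this
          _ ≤ L * δ n := by
              apply mul_le_mul_of_nonneg_left _ (NNReal.coe_nonneg L)
              rw [abs_of_nonneg (by linarith [hy.1.le] : (0:ℝ) ≤ y - x)]
              linarith [hy.2]
      calc |∫ t in x..(x + δ n), (f t - f x)| ≤ (L * δ n) * |(x + δ n) - x| := this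
        _ = L * δ n * δ n := by rw [show (x + δ n) - x = δ n by ring, abs_of_pos (hδpos n)]
    have hLδ : Tendsto (fun n => (L : ℝ) * δ n) atTop (nhds 0) := by
      simpa using hδ0.const_mul (L : ℝ)
    have : Tendsto (fun n => (∫ t in x..(x + δ n), f t) / δ n - f x) atTop (nhds 0) :=
      squeeze_zero_norm (fun n => by simpa [Real.norm_eq_abs] using hbound n) hLδ
    have h2 := this.add_const (f x)
    simpa using h2
  -- Step 3: dominated convergence
  have hdom : Tendsto (fun n => ∫ t in Ioc a b, g n t) atTop
      (nhds (∫ t in Ioc a b, deriv f t)) := by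
    apply MeasureTheory.tendsto_integral_of_dominated_convergence
      (bound := fun _ => (L : ℝ))
    · intro n
      apply ContinuousOn.aestronglyMeasurable _ measurableSet_Ioc
      apply ContinuousOn.mono _ Ioc_subset_Icc_self
      apply ContinuousOn.div_const
      apply ContinuousOn.sub _ (hcont.mono (Icc_subset_Icc le_rfl hbc.le))
      have : ContinuousOn (fun t : ℝ => t + δ n) (Icc a b) := by fun_prop
      apply hcont.comp this
      intro y hy
      show y + δ n ∈ Icc a c
      exact ⟨by linarith [hδpos n, hy.1], by linarith [hδle n, hy.2]⟩
    · exact integrable_const _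
    · intro n
      filter_upwards [ae_restrict_mem measurableSet_Ioc] with t ht
      have ht1 : t ∈ Icc a c := ⟨ht.1.le, ht.2.trans hbc.le⟩
      have ht2 : t + δ n ∈ Icc a c := ⟨by linarith [hδpos n, ht1.1], by
        linarith [hδle n, ht.2]⟩
      have := hf.dist_le_mul (t + δ n) ht2 t ht1
      rw [Real.dist_eq, Real.dist_eq, show t + δ n - t = δ n by ring,
        abs_of_pos (hδpos n)] at this
      rw [hgdef]
      simp only [Real.norm_eq_abs, abs_div, abs_of_pos (hδpos n)]
      rw [div_le_iff₀ (hδpos n)]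
      exact this
    · filter_upwards [lip_ae_hasDerivAt hbc hf] with t ht
      have hslope := hasDerivAt_iff_tendsto_slope.1 ht.1
      have htend : Tendsto (fun n => t + δ n) atTop (nhdsWithin t {t}ᶜ) := by
        apply tendsto_nhdsWithin_of_tendsto_nhds_of_eventually_within
        · simpa using tendsto_const_nhds.add hδ0
        · filter_upwards with n
          simp only [mem_compl_iff, mem_singleton_iff]
          intro h
          nlinarith [hδpos n, congrArg (· - t) h]
      have := hslope.comp htend
      convert this using 2 with n
      simp only [Function.comp_apply, slope_def_field, hgdef]
      rw [div_eq_div_iff (hδpos n).ne' (by nlinarith [hδpos n] : t + δ n - t ≠ 0)]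
      ring
  -- combine
  have hrhs : Tendsto (fun n => ∫ t in Ioc a b, g n t) atTop (nhds (f b - f a)) := by
    have h1 := endpt b ⟨hab, le_rfl⟩
    have h2 := endpt a ⟨le_rfl, hab⟩
    have := h1.sub h2
    apply Tendsto.congr' _ this
    filter_upwards with n
    rw [key n, div_sub_div_same]
  exact tendsto_nhds_unique hdom hrhs

/-- Blow-up rate (Theorem 3.3, abstract form): if `m : [0,T) → ℝ` is locally Lipschitz,
satisfies `-K ≤ m' + ½ m² ≤ K` a.e. on `(0,T)` with `K > 0`, and
`liminf_{t→T⁻} m(t) = -∞`, then `lim_{t→T⁻} (T - t) m(t) = -2`. -/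
theorem blowup_rate (T K : ℝ) (hT : 0 < T) (hK : 0 < K) (m : ℝ → ℝ)
    (hlip : ∀ t ∈ Ico 0 T, ∃ L : NNReal, LipschitzOnWith L m (Icc 0 t))
    (hineq : ∀ᵐ t ∂(volume : Measure ℝ), t ∈ Ioo 0 T →
      -K ≤ deriv m t + (1/2) * (m t) ^ 2 ∧ deriv m t + (1/2) * (m t) ^ 2 ≤ K)
    (hliminf : liminf (fun t => (m t : EReal)) (nhdsWithin T (Iio T)) = ⊥) :
    Tendsto (fun t => (T - t) * m t) (nhdsWithin T (Iio T)) (nhds (-2)) := by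
  have hfreq : ∀ M : ℝ, ∃ᶠ t in nhdsWithin T (Iio T), m t < M := by
    intro M
    have h1 : liminf (fun t => (m t : EReal)) (nhdsWithin T (Iio T)) < (M : EReal) := by
      rw [hliminf]; exact EReal.bot_lt_coe M
    have h2 := frequently_lt_of_liminf_lt (by isBoundedDefault) h1
    exact h2.mono fun t ht => EReal.coe_lt_coe_iff.1 ht
  have hmain : ∀ ε : ℝ, 0 < ε → ε ≤ 1/4 → ∀ᶠ s in nhdsWithin T (Iio T),
      -(1/2 - ε)⁻¹ ≤ (T - s) * m s ∧ (T - s) * m s ≤ -(1/2 + ε)⁻¹ := by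
    intro ε hε hε4
    set c := Real.sqrt (K / ε) with hcdef
    have hc2 : c ^ 2 = K / ε := Real.sq_sqrt (by positivity)
    have hcpos : 0 < c := Real.sqrt_pos.2 (by positivity)
    obtain ⟨t₀, hmt₀, ht₀⟩ : ∃ t₀, m t₀ < -c ∧ t₀ ∈ Ioo 0 T := by
      have hev : Ioo 0 T ∈ nhdsWithin T (Iio T) := Ioo_mem_nhdsLT_of_mem ⟨hT, le_refl T⟩
      exact ((hfreq (-c)).and_eventually hev).exists
    have hcc : 2 * K ≤ c ^ 2 := by
      rw [hc2, le_div_iff₀ hε]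
      have h4 := mul_le_mul_of_nonneg_left hε4 (by linarith : (0:ℝ) ≤ 2 * K)
      linarith
    have hB1 : ∀ s ∈ Ico t₀ T, m s < -c := by
      intro s hsi
      by_contra hcon
      push_neg at hcon
      obtain ⟨hst₀, hsT⟩ := hsi
      set u' := (s + T)/2 with hu'
      have hsu' : s < u' := by linarith
      have hu'T : u' < T := by linarith
      obtain ⟨L, hL⟩ := hlip u' ⟨by linarith [ht₀.1], hu'T⟩
      have hcont : ContinuousOn m (Icc t₀ s) :=
        (hL.continuousOn).mono (Icc_subset_Icc (by linarith [ht₀.1]) (by linarith))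
      set S := Icc t₀ s ∩ m ⁻¹' (Ici (-c)) with hS
      have hSne : S.Nonempty := ⟨s, ⟨⟨hst₀, le_rfl⟩, hcon⟩⟩
      have hSbdd : BddBelow S := BddBelow.mono inter_subset_left bddBelow_Icc
      have hSclosed : IsClosed S :=
        hcont.preimage_isClosed_of_isClosed isClosed_Icc isClosed_Ici
      set σ := sInf S with hσdef
      have hσS : σ ∈ S := hSclosed.csInf_mem hSne hSbdd
      have hσ1 : t₀ ≤ σ := hσS.1.1
      have hσ2 : σ ≤ s := hσS.1.2
      have hσm : -c ≤ m σ := hσS.2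
      have ht₀σ : t₀ < σ := lt_of_le_of_ne hσ1 (fun h => by rw [← h] at hσm; linarith)
      have hbefore : ∀ v ∈ Ico t₀ σ, m v < -c := by
        intro v hv
        by_contra hc2'
        push_neg at hc2'
        have hvS : v ∈ S := ⟨⟨hv.1, le_trans hv.2.le hσ2⟩, hc2'⟩
        exact absurd (csInf_le hSbdd hvS) (not_le.2 hv.2)
      have hLm : LipschitzOnWith L m (Icc t₀ u') := hL.mono (Icc_subset_Icc ht₀.1.le le_rfl)
      have hσu' : σ < u' := by linarith
      have hftc := lip_ftc ht₀σ.le hσu' hLm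
      have hae : ∀ᵐ x ∂(volume.restrict (Ioc t₀ σ)), deriv m x ≤ 0 := by
        rw [Measure.restrict_congr_set Ioo_ae_eq_Ioc.symm,
          ae_restrict_iff' measurableSet_Ioo]
        filter_upwards [hineq] with x hx hmem
        have hxT : x ∈ Ioo 0 T := ⟨by linarith [ht₀.1, hmem.1],
          by linarith [hmem.2, hσ2, hsT]⟩
        have hP := (hx hxT).2
        have hmx : m x < -c := hbefore x ⟨hmem.1.le, hmem.2⟩
        have hcmx : c ≤ -m x := by linarith
        have hmx2 : c ^ 2 ≤ (m x) ^ 2 := by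
          calc c ^ 2 ≤ (-m x) ^ 2 := pow_le_pow_left₀ hcpos.le hcmx 2
            _ = (m x) ^ 2 := by ring
        linarith
      have hint0 : ∫ x in Ioc t₀ σ, deriv m x ≤ 0 := integral_nonpos_of_ae hae
      rw [hftc] at hint0
      linarith
    have hB2 : ∀ s t : ℝ, t₀ ≤ s → s ≤ t → t < T →
        (1/2 - ε) * (t - s) ≤ (m t)⁻¹ - (m s)⁻¹ ∧
        (m t)⁻¹ - (m s)⁻¹ ≤ (1/2 + ε) * (t - s) := by
      intro s t hs hst htT
      rcases eq_or_lt_of_le hst with rfl | hlt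
      · simp
      set c' := (t + T)/2 with hc'def
      have hc'1 : t < c' := by linarith
      have hc'2 : c' < T := by linarith
      obtain ⟨L, hL⟩ := hlip c' ⟨by linarith [ht₀.1], hc'2⟩
      have hLm : LipschitzOnWith L m (Icc s c') :=
        hL.mono (Icc_subset_Icc (by linarith [ht₀.1]) le_rfl)
      set g : ℝ → ℝ := fun u => (m u)⁻¹ with hgdef
      have hIccsub : Icc s c' ⊆ Ico t₀ T := fun x hx =>
        ⟨le_trans hs hx.1, lt_of_le_of_lt hx.2 hc'2⟩
      have hmneg : ∀ x ∈ Icc s c', m x < -c := fun x hx => hB1 x (hIccsub hx)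
      have hc2pos : (0:ℝ) < c ^ 2 := by positivity
      have hgl : LipschitzOnWith (Real.toNNReal ((L : ℝ) / c ^ 2)) g (Icc s c') := by
        rw [lipschitzOnWith_iff_dist_le_mul]
        intro x hx y hy
        have hmx := hmneg x hx
        have hmy := hmneg y hy
        have hmx0 : m x ≠ 0 := by intro h; rw [h] at hmx; linarith
        have hmy0 : m y ≠ 0 := by intro h; rw [h] at hmy; linarith
        rw [Real.dist_eq, Real.dist_eq]
        have heq : g x - g y = (m y - m x) / (m x * m y) := by
          rw [hgdef]
          field_simp
        rw [heq, abs_div]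
        have hd := hLm.dist_le_mul x hx y hy
        rw [Real.dist_eq, Real.dist_eq] at hd
        have habs : c ^ 2 ≤ |m x * m y| := by
          rw [abs_mul]
          have h1 : c ≤ |m x| := by rw [abs_of_neg (by linarith)]; linarith
          have h2 : c ≤ |m y| := by rw [abs_of_neg (by linarith)]; linarith
          calc c ^ 2 = c * c := sq c
            _ ≤ |m x| * |m y| := mul_le_mul h1 h2 hcpos.le (abs_nonneg _)
        rw [Real.coe_toNNReal _ (by positivity)]
        calc |m y - m x| / |m x * m y| ≤ (L * |x - y|) / c ^ 2 := by
              apply div_le_div₀ (mul_nonneg L.coe_nonneg (abs_nonneg _)) _ hc2pos habs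
              rw [abs_sub_comm]
              exact hd
          _ = (L : ℝ) / c ^ 2 * |x - y| := by ring
      have hftc := lip_ftc hst hc'1 hgl
      have hintg := lip_deriv_integrableOn hc'1 hgl
      have hae : ∀ᵐ u ∂(volume.restrict (Ioc s t)),
          (1/2 - ε) ≤ deriv g u ∧ deriv g u ≤ 1/2 + ε := by
        filter_upwards [lip_ae_hasDerivAt hc'1 hLm, ae_restrict_of_ae hineq,
          ae_restrict_mem measurableSet_Ioc] with u hu1 hu2 humem
        have huT : u ∈ Ioo 0 T := ⟨by linarith [ht₀.1, humem.1],
          lt_of_le_of_lt humem.2 htT⟩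
        obtain ⟨hP1, hP2⟩ := hu2 huT
        have hmu : m u < -c := hB1 u ⟨le_trans hs humem.1.le, huT.2⟩
        have hmu0 : m u ≠ 0 := by intro h; rw [h] at hmu; linarith
        have hdg : HasDerivAt g (-(deriv m u) / (m u) ^ 2) u := hu1.1.inv hmu0
        have hdgeq : deriv g u = -(deriv m u) / (m u) ^ 2 := hdg.deriv
        have hqpos : (0:ℝ) < (m u) ^ 2 := by positivity
        have hcmu : c ≤ -m u := by linarith
        have hsq : c ^ 2 ≤ (m u) ^ 2 := by
          calc c ^ 2 ≤ (-m u) ^ 2 := pow_le_pow_left₀ hcpos.le hcmu 2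
            _ = (m u) ^ 2 := by ring
        have hKc : K ≤ ε * (m u) ^ 2 := by
          have h1 : K = ε * c ^ 2 := by rw [hc2]; field_simp
          have h2' := mul_le_mul_of_nonneg_left hsq hε.le
          linarith
        constructor
        · rw [hdgeq, le_div_iff₀ hqpos]
          linarith [hP2, hKc]
        · rw [hdgeq, div_le_iff₀ hqpos]
          linarith [hP1, hKc]
      have hvol : (volume (Ioc s t)).toReal = t - s := by
        rw [Real.volume_Ioc, ENNReal.toReal_ofReal (by linarith)]
      have hconstint : IntegrableOn (fun _ : ℝ => (1:ℝ)) (Ioc s t) volume := by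
        apply (integrableOn_const_iff (C := (1:ℝ))).2
        right
        rw [Real.volume_Ioc]
        exact ENNReal.ofReal_lt_top
      have hclow : ∫ u in Ioc s t, (1/2 - ε : ℝ) = (1/2 - ε) * (t - s) := by
        rw [setIntegral_const, measureReal_def, hvol, smul_eq_mul, mul_comm]
      have hcup : ∫ u in Ioc s t, (1/2 + ε : ℝ) = (1/2 + ε) * (t - s) := by
        rw [setIntegral_const, measureReal_def, hvol, smul_eq_mul, mul_comm]
      have hconst1 : IntegrableOn (fun _ : ℝ => (1/2 - ε : ℝ)) (Ioc s t) volume := by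
        apply (integrableOn_const_iff (C := (1/2 - ε : ℝ))).2
        right
        rw [Real.volume_Ioc]
        exact ENNReal.ofReal_lt_top
      have hconst2 : IntegrableOn (fun _ : ℝ => (1/2 + ε : ℝ)) (Ioc s t) volume := by
        apply (integrableOn_const_iff (C := (1/2 + ε : ℝ))).2
        right
        rw [Real.volume_Ioc]
        exact ENNReal.ofReal_lt_top
      have hlow2 : (1/2 - ε) * (t - s) ≤ ∫ u in Ioc s t, deriv g u := by
        rw [← hclow]
        exact integral_mono_ae hconst1 hintg (hae.mono fun u hu => hu.1)
      have hup2 : ∫ u in Ioc s t, deriv g u ≤ (1/2 + ε) * (t - s) := by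
        rw [← hcup]
        exact integral_mono_ae hintg hconst2 (hae.mono fun u hu => hu.2)
      rw [hftc] at hlow2 hup2
      exact ⟨hlow2, hup2⟩
    have hlow : ∀ s ∈ Ico t₀ T, (1/2 - ε) * (T - s) ≤ -(m s)⁻¹ := by
      intro s hs
      have hev : Ioo s T ∈ nhdsWithin T (Iio T) := Ioo_mem_nhdsLT_of_mem ⟨hs.2, le_refl T⟩
      have hle : ∀ᶠ t in nhdsWithin T (Iio T), (1/2 - ε) * (t - s) ≤ -(m s)⁻¹ := by
        filter_upwards [hev] with t ht
        have h2 := (hB2 s t hs.1 ht.1.le ht.2).1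
        have hmt : m t < -c := hB1 t ⟨hs.1.trans ht.1.le, ht.2⟩
        have h3 : (m t)⁻¹ < 0 := inv_lt_zero.2 (by linarith)
        linarith
      have htend : Tendsto (fun t => (1/2 - ε) * (t - s)) (nhdsWithin T (Iio T))
          (nhds ((1/2 - ε) * (T - s))) := by
        apply Tendsto.mono_left _ nhdsWithin_le_nhds
        exact (continuous_const.mul (continuous_id.sub continuous_const)).tendsto T
      exact le_of_tendsto htend hle
    have hup : ∀ s ∈ Ico t₀ T, -(m s)⁻¹ ≤ (1/2 + ε) * (T - s) := by
      intro s hs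
      apply le_of_forall_pos_le_add
      intro δ hδ
      have hev : Ioo s T ∈ nhdsWithin T (Iio T) := Ioo_mem_nhdsLT_of_mem ⟨hs.2, le_refl T⟩
      obtain ⟨t, hmt, ht⟩ := ((hfreq (-δ⁻¹)).and_eventually hev).exists
      have h2 := (hB2 s t hs.1 ht.1.le ht.2).2
      have hmtneg : -(m t)⁻¹ < δ := by
        have h3 : δ⁻¹ < -m t := by linarith
        have h4 : (0:ℝ) < δ⁻¹ := by positivity
        have h5 : (-m t)⁻¹ < (δ⁻¹)⁻¹ := by
          apply inv_strictAnti₀ h4 h3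
        rwa [inv_inv, inv_neg] at h5
      have hprod : (0:ℝ) ≤ (1/2 + ε) * (T - t) :=
        mul_nonneg (by linarith) (by linarith [ht.2])
      nlinarith [h2, hmtneg, hprod]
    have hev : Ioo t₀ T ∈ nhdsWithin T (Iio T) := Ioo_mem_nhdsLT_of_mem ⟨ht₀.2, le_refl T⟩
    filter_upwards [hev] with s hs
    have hms : m s < -c := hB1 s ⟨hs.1.le, hs.2⟩
    have hmsneg : m s < 0 := by linarith
    have hTs : 0 < T - s := by linarith [hs.2]
    set A : ℝ := -(m s)⁻¹ with hAdef
    have hApos : 0 < A := by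
      rw [hAdef, neg_pos]
      exact inv_lt_zero.2 hmsneg
    have hA1 : (1/2 - ε) * (T - s) ≤ A := hlow s ⟨hs.1.le, hs.2⟩
    have hA2 : A ≤ (1/2 + ε) * (T - s) := hup s ⟨hs.1.le, hs.2⟩
    have hmsA : m s = -A⁻¹ := by
      rw [hAdef, inv_neg, neg_neg, inv_inv]
    have hexp : (T - s) * m s = -((T - s) / A) := by
      rw [hmsA]; field_simp
    constructor
    · rw [hexp, neg_le_neg_iff]
      calc (T - s) / A ≤ (T - s) / ((1/2 - ε) * (T - s)) := by
            apply div_le_div_of_nonneg_left hTs.le (by nlinarith) hA1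
        _ = (1/2 - ε)⁻¹ := by
            rw [mul_comm, ← div_div, div_self hTs.ne']
            exact one_div _
    · rw [hexp, neg_le_neg_iff]
      calc (1/2 + ε)⁻¹ = (T - s) / ((1/2 + ε) * (T - s)) := by
            rw [mul_comm, ← div_div, div_self hTs.ne']
            exact (one_div _).symm
        _ ≤ (T - s) / A := by
            apply div_le_div_of_nonneg_left hTs.le hApos hA2
  rw [Metric.tendsto_nhds]
  intro η hη
  have hε : (0:ℝ) < min (1/4) (η/9) := by positivity
  have hε4 : min (1/4) (η/9) ≤ 1/4 := min_le_left _ _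
  have hε9 : min (1/4) (η/9) ≤ η/9 := min_le_right _ _
  filter_upwards [hmain _ hε hε4] with s hs
  set ε := min (1/4) (η/9)
  have hinv1 : (1/2 - ε)⁻¹ ≤ 2 + 8 * ε := by
    rw [inv_le_iff_one_le_mul₀ (by linarith : (0:ℝ) < 1/2 - ε)]
    nlinarith
  have hinv2 : 2 - 4 * ε ≤ (1/2 + ε)⁻¹ := by
    have hpos : (0:ℝ) < 1/2 + ε := by linarith
    have hmul : (1/2 + ε) * (1/2 + ε)⁻¹ = 1 := mul_inv_cancel₀ hpos.ne'
    nlinarith [hmul, hpos, sq_nonneg ε]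
  rw [Real.dist_eq, abs_lt]
  constructor <;> nlinarith [hs.1, hs.2]
end

section
/- Let m, α : [0,T) → ℝ be C¹ functions satisfying m'(t) = -(1/2)m(t)² + (1/2)α(t)² + f(t) with |f(t)| ≤ c₁ for all t, and α'(t) = -m(t)α(t), with |α(0)| ≥ β > 0. Then the Lyapunov function w(t) = α(0)α(t) + (α(0)/α(t))(1 + m(t)²) satisfies w'(t) ≤ (c₁ + 1/2) w(t), and hence w(t) ≤ w(0) e^{(c₁+1/2)t} for all t ∈ [0,T). -/
open Set

/-- Lyapunov function estimate in the global existence proof (Theorem 4.1): if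
`m' = -½m² + ½α² + f` with `|f| ≤ c₁`, `α' = -mα`, `α` never vanishes and
`|α 0| ≥ β > 0`, then `w(t) = α(0)α(t) + (α(0)/α(t))(1 + m(t)²)` satisfies
`w' ≤ (c₁ + ½) w`, hence `w(t) ≤ w(0) e^{(c₁+½)t}` on `[0,T)`. -/
theorem lyapunov_estimate (T c₁ β : ℝ) (hT : 0 < T) (hc₁ : 0 < c₁) (hβ : 0 < β)
    (m α f : ℝ → ℝ)
    (hf : ∀ t ∈ Ico 0 T, |f t| ≤ c₁)
    (hm : ∀ t ∈ Ico 0 T,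
      HasDerivAt m (-(1/2) * (m t) ^ 2 + (1/2) * (α t) ^ 2 + f t) t)
    (hα : ∀ t ∈ Ico 0 T, HasDerivAt α (-(m t * α t)) t)
    (hαne : ∀ t ∈ Ico 0 T, α t ≠ 0)
    (hα0 : β ≤ |α 0|) :
    (∀ t ∈ Ico 0 T,
        deriv (fun s => α 0 * α s + (α 0 / α s) * (1 + m s ^ 2)) t ≤
          (c₁ + 1/2) * (α 0 * α t + (α 0 / α t) * (1 + m t ^ 2))) ∧
      ∀ t ∈ Ico 0 T,
        α 0 * α t + (α 0 / α t) * (1 + m t ^ 2) ≤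
          (α 0 * α 0 + (α 0 / α 0) * (1 + m 0 ^ 2)) *
            Real.exp ((c₁ + 1/2) * t) := by
  have hα0ne : α 0 ≠ 0 := by
    intro h; rw [h, abs_zero] at hα0; linarith
  set K : ℝ := c₁ + 1/2 with hK
  set w : ℝ → ℝ := fun s => α 0 * α s + (α 0 / α s) * (1 + m s ^ 2) with hwdef
  set wd : ℝ → ℝ := fun s => (α 0 / α s) * (m s * (1 + 2 * f s)) with hwddef
  -- sign constancy: α 0 * α t > 0 on [0,T)
  have hpos : ∀ t ∈ Ico 0 T, 0 < α 0 * α t := by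
    intro t ht
    by_contra h
    push_neg at h
    have hne : α 0 * α t ≠ 0 := mul_ne_zero hα0ne (hαne t ht)
    have hlt : α 0 * α t < 0 := lt_of_le_of_ne h hne
    have hcont : ContinuousOn α (uIcc 0 t) := by
      intro s hs
      rw [uIcc_of_le ht.1] at hs
      exact ((hα s ⟨hs.1, lt_of_le_of_lt hs.2 ht.2⟩).continuousAt).continuousWithinAt
    have hmem : (0:ℝ) ∈ uIcc (α 0) (α t) := by
      rcases mul_neg_iff.1 hlt with ⟨h1, h2⟩ | ⟨h1, h2⟩
      · exact mem_uIcc.2 (Or.inr ⟨h2.le, h1.le⟩)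
      · exact mem_uIcc.2 (Or.inl ⟨h1.le, h2.le⟩)
    obtain ⟨s, hs, hs0⟩ := intermediate_value_uIcc hcont hmem
    rw [uIcc_of_le ht.1] at hs
    exact hαne s ⟨hs.1, lt_of_le_of_lt hs.2 ht.2⟩ hs0
  have hq : ∀ t ∈ Ico 0 T, 0 < α 0 / α t := by
    intro t ht
    have h2 : (0:ℝ) < α t ^ 2 :=
      lt_of_le_of_ne (sq_nonneg _) (Ne.symm (pow_ne_zero _ (hαne t ht)))
    have : α 0 / α t = (α 0 * α t) / α t ^ 2 := by
      field_simp [hαne t ht]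
    rw [this]
    exact div_pos (hpos t ht) h2
  -- derivative of w
  have hwderiv : ∀ t ∈ Ico 0 T, HasDerivAt w (wd t) t := by
    intro t ht
    have hαt := hαne t ht
    have h1 := (hα t ht).const_mul (α 0)
    have h2 := (hasDerivAt_const t (α 0)).div (hα t ht) hαt
    have h3 := ((hm t ht).pow 2).const_add 1
    have h4 := h1.add (h2.mul h3)
    refine h4.congr_deriv ?_
    simp only [hwddef]
    push_cast
    simp only [Pi.div_apply, Pi.pow_apply]
    field_simp
    ring
  -- key differential inequality
  have hkey : ∀ t ∈ Ico 0 T, wd t ≤ K * w t := by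
    intro t ht
    have hqt := hq t ht
    have hPt := hpos t ht
    have hft := hf t ht
    rw [abs_le] at hft
    have ha : 0 ≤ c₁ + f t := by linarith [hft.1]
    have hb : 0 ≤ c₁ - f t := by linarith [hft.2]
    simp only [hwddef, hwdef, hK]
    nlinarith [mul_nonneg (mul_nonneg hqt.le ha) (sq_nonneg (m t - 1)),
      mul_nonneg (mul_nonneg hqt.le hb) (sq_nonneg (m t + 1)),
      mul_nonneg hqt.le (sq_nonneg (m t - 1)),
      mul_pos (show (0:ℝ) < K by simp [hK]; linarith) hPt]
  constructor
  · intro t ht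
    rw [(hwderiv t ht).deriv]
    exact hkey t ht
  · intro t ht
    rcases eq_or_lt_of_le ht.1 with h0 | h0
    · rw [← h0]
      simp
    · have hsub : Icc 0 t ⊆ Ico 0 T := fun s hs => ⟨hs.1, lt_of_le_of_lt hs.2 ht.2⟩
      have hg : ∀ s ∈ Ico 0 T, HasDerivAt (fun u => w u * Real.exp (-K * u))
          ((wd s - K * w s) * Real.exp (-K * s)) s := by
        intro s hs
        have he : HasDerivAt (fun u : ℝ => Real.exp (-K * u)) (Real.exp (-K * s) * -K) s := by
          simpa using ((hasDerivAt_id s).const_mul (-K)).exp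
        have h1 := (hwderiv s hs).mul he
        refine h1.congr_deriv ?_
        ring
      have hmono : AntitoneOn (fun u => w u * Real.exp (-K * u)) (Icc 0 t) := by
        apply antitoneOn_of_deriv_nonpos (convex_Icc 0 t)
        · intro s hs
          exact (hg s (hsub hs)).continuousAt.continuousWithinAt
        · intro s hs
          rw [interior_Icc] at hs
          exact (hg s (hsub (Ioo_subset_Icc_self hs))).differentiableAt.differentiableWithinAt
        · intro s hs
          rw [interior_Icc] at hs
          have hs' := hsub (Ioo_subset_Icc_self hs)
          rw [(hg s hs').deriv]
          have := hkey s hs'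
          nlinarith [Real.exp_pos (-K * s)]
      have h2 : w t * Real.exp (-K * t) ≤ w 0 * Real.exp (-K * 0) :=
        hmono (left_mem_Icc.2 ht.1) (right_mem_Icc.2 ht.1) ht.1
      rw [mul_zero, Real.exp_zero, mul_one] at h2
      have hz : -K * t + K * t = 0 := by ring
      calc w t = w t * Real.exp (-K * t) * Real.exp (K * t) := by
            rw [mul_assoc, ← Real.exp_add, hz, Real.exp_zero, mul_one]
        _ ≤ w 0 * Real.exp (K * t) :=
            mul_le_mul_of_nonneg_right h2 (Real.exp_nonneg _)
end

section
/- Under the hypotheses of the preceding ODE system (m' = -(1/2)m² + (1/2)α² + f with |f| ≤ c₁, α' = -mα, α(0) ≠ 0 with |α(0)| ≥ β > 0), the a-priori bound |m(t)| ≤ (w(0)/(2β)) e^{(c₁ + 1/2)t} holds for all t ∈ [0,T), where w(t) = α(0)α(t) + (α(0)/α(t))(1 + m(t)²). In particular m stays bounded on any finite time interval. -/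
open Set

/-- A-priori bound on `m` from the Lyapunov function (Theorem 4.1): under
`m' = -½m² + ½α² + f`, `|f| ≤ c₁`, `α' = -mα`, `|α 0| ≥ β > 0`, one has
`|m(t)| ≤ (w(0)/(2β)) e^{(c₁+½)t}` with `w(t) = α(0)α(t) + (α(0)/α(t))(1 + m(t)²)`. -/
theorem apriori_bound_m (T c₁ β : ℝ) (hT : 0 < T) (hc₁ : 0 < c₁) (hβ : 0 < β)
    (m α f : ℝ → ℝ)
    (hf : ∀ t ∈ Ico 0 T, |f t| ≤ c₁)
    (hm : ∀ t ∈ Ico 0 T,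
      HasDerivAt m (-(1/2) * (m t) ^ 2 + (1/2) * (α t) ^ 2 + f t) t)
    (hα : ∀ t ∈ Ico 0 T, HasDerivAt α (-(m t * α t)) t)
    (hαne : ∀ t ∈ Ico 0 T, α t ≠ 0)
    (hα0 : β ≤ |α 0|) :
    ∀ t ∈ Ico 0 T,
      |m t| ≤ (α 0 * α 0 + (α 0 / α 0) * (1 + m 0 ^ 2)) / (2 * β) *
        Real.exp ((c₁ + 1/2) * t) := by
  have h0T : (0:ℝ) ∈ Ico 0 T := ⟨le_refl 0, hT⟩
  -- sign of α is constant
  have hαpos : ∀ u ∈ Ico 0 T, 0 < α 0 * α u := by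
    intro u hu
    by_contra h
    push_neg at h
    have hne : α 0 * α u ≠ 0 := mul_ne_zero (hαne 0 h0T) (hαne u hu)
    have hlt : α 0 * α u < 0 := lt_of_le_of_ne h hne
    have hcont : ContinuousOn (fun x => α 0 * α x) (Icc 0 u) := by
      intro x hx
      exact (continuousAt_const.mul (hα x ⟨hx.1, lt_of_le_of_lt hx.2 hu.2⟩).continuousAt).continuousWithinAt
    have h0pos : 0 < α 0 * α 0 := mul_self_pos.mpr (hαne 0 h0T)
    have : (0:ℝ) ∈ Icc (α 0 * α u) (α 0 * α 0) := ⟨le_of_lt hlt, le_of_lt h0pos⟩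
    obtain ⟨c, hc, hc0⟩ := intermediate_value_Icc' hu.1 hcont this
    exact hαne c ⟨hc.1, lt_of_le_of_lt hc.2 hu.2⟩ (by
      have h0 := hαne 0 h0T
      exact (mul_eq_zero.mp hc0).resolve_left h0)
  set K : ℝ := c₁ + 1/2 with hK
  set w : ℝ → ℝ := fun u => α 0 * α u + (α 0 / α u) * (1 + m u ^ 2) with hw
  have hqpos : ∀ u ∈ Ico 0 T, 0 < α 0 / α u := by
    intro u hu
    rcases mul_pos_iff.mp (hαpos u hu) with ⟨h1, h2⟩ | ⟨h1, h2⟩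
    · exact div_pos h1 h2
    · exact div_pos_of_neg_of_neg h1 h2
  have hβa : β ^ 2 ≤ α 0 * α 0 := by
    nlinarith [abs_nonneg (α 0), sq_abs (α 0)]
  have hwge : ∀ u ∈ Ico 0 T, 2 * β * |m u| ≤ w u := by
    intro u hu
    have hp := hαpos u hu
    have hq := hqpos u hu
    have hpq : (α 0 * α u) * (α 0 / α u) = α 0 * α 0 := by
      field_simp [hαne u hu]
    have hm2 : |m u| ^ 2 = m u ^ 2 := sq_abs _
    set p := α 0 * α u
    set q := α 0 / α u
    set x := |m u| with hx
    have h2 : (2 * β * x) ^ 2 ≤ (p + q * x ^ 2) ^ 2 := by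
      nlinarith [sq_nonneg (p - q * x ^ 2), sq_nonneg x,
        mul_nonneg (sub_nonneg.mpr hβa) (sq_nonneg x)]
    have hA : 0 ≤ p + q * x ^ 2 := by positivity
    have hB : 0 ≤ 2 * β * x := by positivity
    have h3 : 2 * β * x ≤ p + q * x ^ 2 := by nlinarith
    have : w u = p + q * (1 + m u ^ 2) := rfl
    rw [this, ← hm2]
    nlinarith
  have hwpos : ∀ u ∈ Ico 0 T, 0 < w u := by
    intro u hu
    have hp := hαpos u hu
    have hq := hqpos u hu
    have : 0 < (α 0 / α u) * (1 + m u ^ 2) := by positivity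
    simp only [hw]; linarith
  have hderiv : ∀ u ∈ Ico 0 T,
      HasDerivAt w ((α 0 / α u) * m u * (2 * f u + 1)) u := by
    intro u hu
    have hαu := hαne u hu
    have h1 : HasDerivAt (fun x => α 0 * α x) (α 0 * (-(m u * α u))) u :=
      (hα u hu).const_mul _
    have h2 : HasDerivAt (fun x => 1 + m x ^ 2)
        (0 + 2 * m u ^ 1 * (-(1/2) * (m u) ^ 2 + (1/2) * (α u) ^ 2 + f u)) u :=
      (hasDerivAt_const u (1:ℝ)).add ((hm u hu).pow 2)
    have h3 : HasDerivAt (fun x => α 0 / α x)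
        ((0 * α u - α 0 * (-(m u * α u))) / α u ^ 2) u :=
      (hasDerivAt_const u (α 0)).div (hα u hu) hαu
    have h4 := h1.add (h3.mul h2)
    refine h4.congr_deriv ?_
    field_simp
    ring
  intro t ht
  have hsub : Icc 0 t ⊆ Ico 0 T := fun x hx => ⟨hx.1, lt_of_le_of_lt hx.2 ht.2⟩
  have hwcont : ContinuousOn w (Icc 0 t) := fun x hx =>
    ((hderiv x (hsub hx)).continuousAt).continuousWithinAt
  have hbound : ∀ x ∈ Ico 0 t, ‖(α 0 / α x) * m x * (2 * f x + 1)‖ ≤ K * ‖w x‖ + 0 := by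
    intro x hx
    have hx' : x ∈ Ico 0 T := ⟨hx.1, lt_trans hx.2 ht.2⟩
    have hq := hqpos x hx'
    have hp := hαpos x hx'
    have hfx := hf x hx'
    have h2m : 2 * |m x| ≤ 1 + m x ^ 2 := by
      nlinarith [sq_nonneg (|m x| - 1), sq_abs (m x)]
    have hwx := hwpos x hx'
    rw [Real.norm_eq_abs, Real.norm_eq_abs, abs_of_pos hwx, add_zero]
    have habs : |(α 0 / α x) * m x * (2 * f x + 1)|
        = (α 0 / α x) * |m x| * |2 * f x + 1| := by
      rw [abs_mul, abs_mul, abs_of_pos hq]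
    rw [habs]
    have h2f : |2 * f x + 1| ≤ 2 * c₁ + 1 := by
      have := abs_le.mp hfx
      rw [abs_le]; constructor <;> linarith
    have hK2 : K = (2 * c₁ + 1) / 2 := by rw [hK]; ring
    have step1 : (α 0 / α x) * |m x| * |2 * f x + 1| ≤ (α 0 / α x) * |m x| * (2 * c₁ + 1) := by
      have : 0 ≤ (α 0 / α x) * |m x| := by positivity
      exact mul_le_mul_of_nonneg_left h2f this
    have step2 : (α 0 / α x) * |m x| * (2 * c₁ + 1) ≤ K * w x := by
      rw [hK2]
      have hw' : (α 0 / α x) * (1 + m x ^ 2) ≤ w x := by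
        simp only [hw]; nlinarith
      nlinarith [mul_le_mul_of_nonneg_left h2m (le_of_lt hq), hc₁]
    linarith
  have key := norm_le_gronwallBound_of_norm_deriv_right_le hwcont
    (fun x hx => (hderiv x ⟨hx.1, lt_trans hx.2 ht.2⟩).hasDerivWithinAt)
    (le_of_eq (Real.norm_eq_abs (w 0) ▸ abs_of_pos (hwpos 0 h0T)))
    hbound t ⟨ht.1, le_refl t⟩
  rw [Real.norm_eq_abs, abs_of_pos (hwpos t ht), sub_zero, gronwallBound_ε0] at key
  have hmw := hwge t ht
  have hw0 : w 0 = α 0 * α 0 + (α 0 / α 0) * (1 + m 0 ^ 2) := rfl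
  rw [hw0] at key
  rw [div_mul_eq_mul_div, le_div_iff₀ (by positivity : (0:ℝ) < 2 * β)]
  calc |m t| * (2 * β) = 2 * β * |m t| := by ring
    _ ≤ w t := hmw
    _ ≤ (α 0 * α 0 + (α 0 / α 0) * (1 + m 0 ^ 2)) * Real.exp (K * t) := key
    _ = (α 0 * α 0 + (α 0 / α 0) * (1 + m 0 ^ 2)) * Real.exp ((c₁ + 1/2) * t) := by rw [hK]
end
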